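/- There exist absolute constants c, C > 0 such that for all finitely supported real sequences b = {b_I} and β = {β_I}, c · ‖{b_I β_I}‖_Carl ≤ ‖P^{1,0}_b P^{σ,0,1}_β‖_{E,2→2} ≤ C · ‖{b_I β_I}‖_Carl, where σ ranges over independent uniform ±1 random signs. -/

import Mathlib

open MeasureTheory ProbabilityTheory Real Filter
open scoped ENNReal

attribute [local instance] Classical.propDecidable

noncomputable section

namespace RandomParaproducts

/-- Dyadic intervals: `(n, k)` represents `[k·2ⁿ, (k+1)·2ⁿ)`. -/
abbrev D : Type := ℤ × ℤ

/-- The length `2ⁿ` of the dyadic interval `(n, k)`. -/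
def len (I : D) : ℝ := (2 : ℝ) ^ I.1

/-- The dyadic interval `[k·2ⁿ, (k+1)·2ⁿ)` as a subset of `ℝ`. -/
def ival (I : D) : Set ℝ := Set.Ico ((I.2 : ℝ) * (2 : ℝ) ^ I.1) (((I.2 : ℝ) + 1) * (2 : ℝ) ^ I.1)

/-- The left half of a dyadic interval. -/
def lc (I : D) : D := (I.1 - 1, 2 * I.2)

/-- The right half of a dyadic interval. -/
def rc (I : D) : D := (I.1 - 1, 2 * I.2 + 1)

/-- The `L²`-normalized Haar function `h_I = h⁰_I`. -/
def haar (I : D) : ℝ → ℝ := fun x =>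
  (Real.sqrt (len I))⁻¹ *
    ((ival (rc I)).indicator (fun _ => (1 : ℝ)) x - (ival (lc I)).indicator (fun _ => (1 : ℝ)) x)

/-- The function `h¹_I = |h_I| = |I|^{-1/2} 1_I`. -/
def haar1 (I : D) : ℝ → ℝ := fun x =>
  (Real.sqrt (len I))⁻¹ * (ival I).indicator (fun _ => (1 : ℝ)) x

/-- `h^ε_I`, where `false` codes the exponent `0` and `true` codes the exponent `1`. -/
def hfun : Bool → D → ℝ → ℝ
  | false => haar
  | true => haar1

/-- The inner product `⟨f, g⟩ = ∫ f g` on `L²(ℝ)`. -/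
def ip (f g : ℝ → ℝ) : ℝ := ∫ x, f x * g x

/-- The paraproduct `P^{ε,δ}_b f = ∑_I b_I ⟨f, h^δ_I⟩ h^ε_I` with finitely supported
numerical symbol `b`. -/
def P (e d : Bool) (b : D →₀ ℝ) (f : ℝ → ℝ) : ℝ → ℝ := fun x =>
  ∑ I ∈ b.support, b I * ip f (hfun d I) * hfun e I x

/-- The signed paraproduct `P^{σ,ε,δ}_b f = ∑_I σ_I b_I ⟨f, h^δ_I⟩ h^ε_I`. -/
def Psig (σ : D → ℝ) (e d : Bool) (b : D →₀ ℝ) (f : ℝ → ℝ) : ℝ → ℝ := fun x =>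
  ∑ I ∈ b.support, σ I * (b I * ip f (hfun d I) * hfun e I x)

/-- The square of the `L²(ℝ)` norm, `‖g‖₂² = ∫ g²`. -/
def l2normSq (g : ℝ → ℝ) : ℝ := ∫ x, (g x) ^ 2

/-- The Carleson norm of a sequence `a` whose nonzero entries lie in the finite set `s`:
`sup_J (|J|⁻¹ ∑_{I ⊆ J} a_I² |I|)^{1/2}`. -/
def carlOn (s : Finset D) (a : D → ℝ) : ℝ :=
  ⨆ J : D, Real.sqrt ((len J)⁻¹ *
    ∑ I ∈ s.filter (fun I => ival I ⊆ ival J), (a I) ^ 2 * len I)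

/-- `μ` is the law of independent uniformly distributed random signs `{σ_I : I ∈ 𝒟}`. -/
def IsSignMeasure (μ : Measure (D → ℝ)) : Prop :=
  IsProbabilityMeasure μ ∧
    iIndepFun (m := fun _ : D => (inferInstance : MeasurableSpace ℝ)) (fun I σ => σ I) μ ∧
    ∀ I : D, μ.map (fun σ => σ I) =
      (2⁻¹ : ℝ≥0∞) • (Measure.dirac (1 : ℝ) + Measure.dirac (-1 : ℝ))

/-- `f` is a unit vector of `L²(ℝ)`. -/
def UnitL2 (f : ℝ → ℝ) : Prop := MemLp f 2 volume ∧ eLpNorm f 2 volume = 1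

/-- The operator norm on `L²(ℝ)` of a map defined on functions. -/
def opNorm (T : (ℝ → ℝ) → ℝ → ℝ) : ℝ :=
  ⨆ f : {f : ℝ → ℝ // UnitL2 f}, Real.sqrt (l2normSq (T f.1))

/-- The averaged operator norm `sup_{‖f‖₂ = 1} (𝔼 ‖T_σ f‖₂²)^{1/2}`. -/
def avgOpNorm (μ : Measure (D → ℝ)) (T : (D → ℝ) → (ℝ → ℝ) → ℝ → ℝ) : ℝ :=
  ⨆ f : {f : ℝ → ℝ // UnitL2 f}, Real.sqrt (∫ σ, l2normSq (T σ f.1) ∂μ)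

/-- `b` is the finite linear combination of Haar functions with coefficients `c`. -/
def FinHaar (b : ℝ → ℝ) (c : D →₀ ℝ) : Prop :=
  b = fun x => ∑ I ∈ c.support, c I * haar I x

/-- The paraproduct `P^{ε,γ}_{b,α} f = ∑_{I} (⟨b, h^α_I⟩/|I|^{1/2}) ⟨f, h^γ_I⟩ h^ε_I` with
function symbol `b`, the sum extended over a finite set `s` containing all the
nonvanishing terms. -/
def Pb (s : Finset D) (e g a : Bool) (b : ℝ → ℝ) (f : ℝ → ℝ) : ℝ → ℝ := fun x =>
  ∑ I ∈ s, (ip b (hfun a I) / Real.sqrt (len I)) * ip f (hfun g I) * hfun e I x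

lemma measurableSet_ival (I : D) : MeasurableSet (ival I) := measurableSet_Ico

lemma volume_ival_ne_top (I : D) : volume (ival I) ≠ ⊤ := by
  simp only [ival, Real.volume_Ico]; exact ENNReal.ofReal_ne_top

lemma memℒp_haar (I : D) : MemLp (haar I) 2 volume := by
  have h1 : MemLp ((ival (rc I)).indicator (fun _ => (1 : ℝ))) 2 volume :=
    memLp_indicator_const 2 (measurableSet_ival _) 1 (Or.inr (volume_ival_ne_top _))
  have h2 : MemLp ((ival (lc I)).indicator (fun _ => (1 : ℝ))) 2 volume :=
    memLp_indicator_const 2 (measurableSet_ival _) 1 (Or.inr (volume_ival_ne_top _))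
  exact ((h1.sub h2).const_mul ((Real.sqrt (len I))⁻¹))

/-- The Haar function `h_I` as an element of `L²(ℝ)`. -/
def haarLp (I : D) : Lp ℝ 2 (volume : Measure ℝ) := (memℒp_haar I).toLp (haar I)

/-- The random Haar multiplier `T_σ f = ∑_{I ∈ 𝒟} σ_I ⟨f, h_I⟩ h_I`, as an element of
`L²(ℝ)`; the (infinite) sum converges unconditionally in `L²`. -/
def Tfull (σ : D → ℝ) (g : ℝ → ℝ) : Lp ℝ 2 (volume : Measure ℝ) :=
  ∑' I : D, (σ I * ip g (haar I)) • haarLp I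

/-- The composition `M_b T_σ M_β` applied to `f`, as a function. -/
def MbTM (σ : D → ℝ) (b β f : ℝ → ℝ) : ℝ → ℝ := fun x =>
  b x * (Tfull σ fun y => β y * f y) x


/-! ### Auxiliary development -/

lemma len_pos (I : D) : 0 < len I := zpow_pos two_pos _

lemma sqrt_len_pos (I : D) : 0 < Real.sqrt (len I) := Real.sqrt_pos.2 (len_pos I)

lemma ival_nonempty (I : D) : (ival I).Nonempty := by
  refine Set.nonempty_Ico.2 ?_
  have := len_pos I
  unfold len at this
  nlinarith [this]

lemma volume_ival (I : D) : volume (ival I) = ENNReal.ofReal (len I) := by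
  rw [ival, Real.volume_Ico]
  congr 1
  unfold len; ring

lemma len_lc (I : D) : len (lc I) = len I / 2 := by
  simp only [len, lc]
  rw [zpow_sub₀ (by norm_num : (2:ℝ) ≠ 0)]
  norm_num

lemma len_rc (I : D) : len (rc I) = len I / 2 := by
  simp only [len, rc]
  rw [zpow_sub₀ (by norm_num : (2:ℝ) ≠ 0)]
  norm_num

lemma two_zpow_sub_one (n : ℤ) : (2:ℝ) ^ n = 2 * (2:ℝ) ^ (n - 1) := by
  rw [zpow_sub₀ (by norm_num : (2:ℝ) ≠ 0)]; ring

lemma ival_lc (I : D) : ival (lc I) = Set.Ico ((I.2 : ℝ) * (2:ℝ) ^ I.1) ((I.2 : ℝ) * (2:ℝ) ^ I.1 + (2:ℝ) ^ (I.1 - 1)) := by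
  unfold ival lc
  have h2 := two_zpow_sub_one I.1
  congr 1 <;> push_cast <;> rw [h2] <;> ring

lemma ival_rc (I : D) : ival (rc I) = Set.Ico ((I.2 : ℝ) * (2:ℝ) ^ I.1 + (2:ℝ) ^ (I.1 - 1)) (((I.2 : ℝ) + 1) * (2:ℝ) ^ I.1) := by
  unfold ival rc
  have h2 := two_zpow_sub_one I.1
  congr 1 <;> push_cast <;> rw [h2] <;> ring

lemma halves_disjoint (I : D) : Disjoint (ival (lc I)) (ival (rc I)) := by
  rw [ival_lc, ival_rc, Set.Ico_disjoint_Ico]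
  exact inf_le_left.trans le_sup_right

lemma halves_union (I : D) : ival (lc I) ∪ ival (rc I) = ival I := by
  rw [ival_lc, ival_rc, ival]
  apply Set.Ico_union_Ico_eq_Ico
  · have : (0:ℝ) < (2:ℝ) ^ (I.1 - 1) := zpow_pos two_pos _
    linarith
  · have : (0:ℝ) < (2:ℝ) ^ (I.1 - 1) := zpow_pos two_pos _
    have h2 := two_zpow_sub_one I.1
    nlinarith

lemma lc_subset (I : D) : ival (lc I) ⊆ ival I := by
  rw [← halves_union I]; exact Set.subset_union_left

lemma rc_subset (I : D) : ival (rc I) ⊆ ival I := by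
  rw [← halves_union I]; exact Set.subset_union_right

lemma same_scale_disjoint {I J : D} (h : I.1 = J.1) (hk : I.2 ≠ J.2) :
    Disjoint (ival I) (ival J) := by
  rw [ival, ival, ← h, Set.Ico_disjoint_Ico]
  have hpow : (0:ℝ) < (2:ℝ) ^ I.1 := zpow_pos two_pos _
  rcases lt_or_gt_of_ne hk with hlt | hlt
  · have h1 : (I.2 : ℝ) + 1 ≤ (J.2 : ℝ) := by exact_mod_cast hlt
    refine min_le_iff.2 (Or.inl (le_max_iff.2 (Or.inr ?_)))
    nlinarith
  · have h1 : (J.2 : ℝ) + 1 ≤ (I.2 : ℝ) := by exact_mod_cast hlt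
    refine min_le_iff.2 (Or.inr (le_max_iff.2 (Or.inl ?_)))
    nlinarith

/-- The dyadic parent. -/
def par (I : D) : D := (I.1 + 1, I.2 / 2)

lemma subset_par (I : D) : ival I ⊆ ival (par I) := by
  obtain ⟨n, k⟩ := I
  have hpow : (0:ℝ) < (2:ℝ) ^ n := zpow_pos two_pos _
  have h2 : (2:ℝ) ^ (n + 1) = 2 * (2:ℝ) ^ n := by
    rw [zpow_add₀ (by norm_num : (2:ℝ) ≠ 0)]; ring
  rw [ival, ival]
  apply Set.Ico_subset_Ico
  · show ((k / 2 : ℤ) : ℝ) * (2:ℝ) ^ (n + 1) ≤ (k : ℝ) * (2:ℝ) ^ n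
    have h3 : (2 : ℝ) * ((k / 2 : ℤ) : ℝ) ≤ (k : ℝ) := by
      have : (2 * (k / 2) : ℤ) ≤ k := by omega
      exact_mod_cast this
    rw [h2]; nlinarith
  · show ((k : ℝ) + 1) * (2:ℝ) ^ n ≤ (((k / 2 : ℤ) : ℝ) + 1) * (2:ℝ) ^ (n + 1)
    have h3 : (k : ℝ) + 1 ≤ 2 * ((k / 2 : ℤ) : ℝ) + 2 := by
      have : (k : ℤ) + 1 ≤ 2 * (k / 2) + 2 := by omega
      exact_mod_cast this
    rw [h2]; nlinarith

lemma dichotomy_aux (m : ℕ) : ∀ I J : D, I.1 + m = J.1 →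
    ival I ⊆ ival J ∨ Disjoint (ival I) (ival J) := by
  induction m with
  | zero =>
    intro I J hm
    by_cases hk : I.2 = J.2
    · left
      have : I = J := Prod.ext (by omega) hk
      rw [this]
    · right; exact same_scale_disjoint (by omega) hk
  | succ m ih =>
    intro I J hm
    rcases ih (par I) J (by simp only [par]; omega) with hsub | hdis
    · left; exact (subset_par I).trans hsub
    · right; exact Disjoint.mono_left (subset_par I) hdis

lemma dichotomy_of_le {I J : D} (h : I.1 ≤ J.1) :
    ival I ⊆ ival J ∨ Disjoint (ival I) (ival J) := by
  obtain ⟨m, hm⟩ := Int.le.dest h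
  exact dichotomy_aux m I J hm

lemma scale_le_of_subset {I J : D} (h : ival I ⊆ ival J) : I.1 ≤ J.1 := by
  have hvol : volume (ival I) ≤ volume (ival J) := measure_mono h
  rw [volume_ival, volume_ival] at hvol
  have h1 : len I ≤ len J := by
    have := (ENNReal.ofReal_le_ofReal_iff (le_of_lt (len_pos J))).1 hvol
    exact this
  unfold len at h1
  exact (zpow_le_zpow_iff_right₀ (by norm_num : (1:ℝ) < 2)).1 h1

lemma eq_of_subset_same_scale {I J : D} (h : ival I ⊆ ival J) (hs : I.1 = J.1) : I = J := by
  have hpow : (0:ℝ) < (2:ℝ) ^ I.1 := zpow_pos two_pos _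
  have hlt : ((I.2 : ℝ)) * (2:ℝ) ^ I.1 < ((I.2 : ℝ) + 1) * (2:ℝ) ^ I.1 := by nlinarith
  rw [ival, ival, Set.Ico_subset_Ico_iff hlt, ← hs] at h
  obtain ⟨h1, h2⟩ := h
  have e1 : (J.2 : ℝ) ≤ I.2 := le_of_mul_le_mul_right h1 hpow
  have e2 : (I.2 : ℝ) + 1 ≤ (J.2 : ℝ) + 1 := le_of_mul_le_mul_right h2 hpow
  have : I.2 = J.2 := by
    have e1' : (J.2 : ℤ) ≤ I.2 := by exact_mod_cast e1
    have e2' : (I.2 : ℤ) ≤ J.2 := by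
      have : (I.2 : ℝ) ≤ J.2 := by linarith
      exact_mod_cast this
    omega
  exact Prod.ext hs this

lemma dichotomy (I J : D) : ival I ⊆ ival J ∨ ival J ⊆ ival I ∨ Disjoint (ival I) (ival J) := by
  rcases le_total I.1 J.1 with h | h
  · rcases dichotomy_of_le h with h' | h'
    · exact Or.inl h'
    · exact Or.inr (Or.inr h')
  · rcases dichotomy_of_le h with h' | h'
    · exact Or.inr (Or.inl h')
    · exact Or.inr (Or.inr h'.symm)

lemma scale_lt_of_ssubset {I J : D} (h : ival I ⊆ ival J) (hne : I ≠ J) : I.1 < J.1 := by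
  rcases lt_or_eq_of_le (scale_le_of_subset h) with h' | h'
  · exact h'
  · exact absurd (eq_of_subset_same_scale h h') hne

lemma len_le_of_subset {I J : D} (h : ival I ⊆ ival J) : len I ≤ len J := by
  have := scale_le_of_subset h
  exact zpow_le_zpow_right₀ (by norm_num : (1:ℝ) ≤ 2) this

lemma measurableSet_ival' (I : D) : MeasurableSet (ival I) := measurableSet_Ico

lemma volume_ival_lt_top (I : D) : volume (ival I) < ⊤ := by
  rw [volume_ival]; exact ENNReal.ofReal_lt_top

lemma sqrt_len_ne (I : D) : Real.sqrt (len I) ≠ 0 := (sqrt_len_pos I).ne'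

lemma mul_self_sqrt_len (I : D) : Real.sqrt (len I) * Real.sqrt (len I) = len I :=
  Real.mul_self_sqrt (len_pos I).le

/-! ### Pointwise facts -/

lemma haar_support {I : D} {x : ℝ} (hx : x ∉ ival I) : haar I x = 0 := by
  unfold haar
  rw [Set.indicator_of_notMem (fun h => hx (rc_subset I h)),
    Set.indicator_of_notMem (fun h => hx (lc_subset I h))]
  ring

lemma haar1_support {I : D} {x : ℝ} (hx : x ∉ ival I) : haar1 I x = 0 := by
  unfold haar1
  rw [Set.indicator_of_notMem hx]
  ring

lemma haar1_eval {I : D} {x : ℝ} (hx : x ∈ ival I) : haar1 I x = (Real.sqrt (len I))⁻¹ := by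
  unfold haar1
  rw [Set.indicator_of_mem hx]
  ring

lemma haar_eval_rc {I : D} {x : ℝ} (hx : x ∈ ival (rc I)) :
    haar I x = (Real.sqrt (len I))⁻¹ := by
  unfold haar
  rw [Set.indicator_of_mem hx, Set.indicator_of_notMem
    (fun h => (halves_disjoint I).ne_of_mem h hx rfl)]
  ring

lemma haar_eval_lc {I : D} {x : ℝ} (hx : x ∈ ival (lc I)) :
    haar I x = -(Real.sqrt (len I))⁻¹ := by
  unfold haar
  rw [Set.indicator_of_mem hx, Set.indicator_of_notMem
    (fun h => (halves_disjoint I).ne_of_mem hx h rfl)]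
  ring

lemma haar_sq (I : D) (x : ℝ) :
    haar I x * haar I x = (len I)⁻¹ * (ival I).indicator (fun _ => (1:ℝ)) x := by
  by_cases hx : x ∈ ival I
  · rw [Set.indicator_of_mem hx]
    rcases (halves_union I ▸ hx : x ∈ ival (lc I) ∪ ival (rc I)) with h | h
    · rw [haar_eval_lc h]
      rw [show -(Real.sqrt (len I))⁻¹ * -(Real.sqrt (len I))⁻¹
          = (Real.sqrt (len I) * Real.sqrt (len I))⁻¹ by rw [mul_inv]; ring,
        mul_self_sqrt_len]
      ring
    · rw [haar_eval_rc h]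
      rw [show (Real.sqrt (len I))⁻¹ * (Real.sqrt (len I))⁻¹
          = (Real.sqrt (len I) * Real.sqrt (len I))⁻¹ by rw [mul_inv],
        mul_self_sqrt_len]
      ring
  · rw [Set.indicator_of_notMem hx, haar_support hx]
    ring

lemma haar1_sq (I : D) (x : ℝ) :
    haar1 I x * haar1 I x = (len I)⁻¹ * (ival I).indicator (fun _ => (1:ℝ)) x := by
  by_cases hx : x ∈ ival I
  · rw [Set.indicator_of_mem hx, haar1_eval hx,
      show (Real.sqrt (len I))⁻¹ * (Real.sqrt (len I))⁻¹
          = (Real.sqrt (len I) * Real.sqrt (len I))⁻¹ by rw [mul_inv],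
      mul_self_sqrt_len]
    ring
  · rw [Set.indicator_of_notMem hx, haar1_support hx]
    ring

/-! ### Integrability -/

lemma integrable_indicator_ival (I : D) (c : ℝ) :
    Integrable (fun x => (ival I).indicator (fun _ => c) x) volume := by
  rw [integrable_indicator_iff (measurableSet_ival' I)]
  exact integrableOn_const (volume_ival_lt_top I).ne

lemma integrable_haar (I : D) : Integrable (haar I) volume := by
  unfold haar
  exact (((integrable_indicator_ival (rc I) 1).sub (integrable_indicator_ival (lc I) 1)).const_mul _)

lemma integrable_haar1 (I : D) : Integrable (haar1 I) volume := by
  unfold haar1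
  exact ((integrable_indicator_ival I 1).const_mul _)

lemma memℒp_haar1 (I : D) : MemLp (haar1 I) 2 volume := by
  have h1 : MemLp ((ival I).indicator (fun _ => (1 : ℝ))) 2 volume :=
    memLp_indicator_const 2 (measurableSet_ival' _) 1 (Or.inr (volume_ival_lt_top _).ne)
  exact h1.const_mul _

lemma memℒp_haar' (I : D) : MemLp (haar I) 2 volume := by
  have h1 : MemLp ((ival (rc I)).indicator (fun _ => (1 : ℝ))) 2 volume :=
    memLp_indicator_const 2 (measurableSet_ival' _) 1 (Or.inr (volume_ival_lt_top _).ne)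
  have h2 : MemLp ((ival (lc I)).indicator (fun _ => (1 : ℝ))) 2 volume :=
    memLp_indicator_const 2 (measurableSet_ival' _) 1 (Or.inr (volume_ival_lt_top _).ne)
  exact ((h1.sub h2).const_mul ((Real.sqrt (len I))⁻¹))

lemma integrable_mul_L2 {f g : ℝ → ℝ} (hf : MemLp f 2 volume) (hg : MemLp g 2 volume) :
    Integrable (fun x => f x * g x) volume := by
  have h : MemLp (g • f) 1 volume := hf.smul hg (hpqr := ⟨by simp [one_div, ENNReal.inv_two_add_inv_two]⟩)
  rw [memLp_one_iff_integrable] at h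
  exact h.congr (Filter.Eventually.of_forall (fun x => mul_comm (g x) (f x)))

/-! ### Integrals -/

lemma integral_indicator_ival (I : D) (c : ℝ) :
    ∫ x, (ival I).indicator (fun _ => c) x = c * len I := by
  rw [integral_indicator_const c (measurableSet_ival' I), measureReal_def, volume_ival,
    ENNReal.toReal_ofReal (len_pos I).le, smul_eq_mul, mul_comm]

lemma integral_haar (I : D) : ∫ x, haar I x = 0 := by
  unfold haar
  rw [integral_const_mul, integral_sub (integrable_indicator_ival _ 1) (integrable_indicator_ival _ 1),
    integral_indicator_ival, integral_indicator_ival, len_lc, len_rc]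
  ring

lemma integral_haar1 (I : D) : ∫ x, haar1 I x = Real.sqrt (len I) := by
  unfold haar1
  rw [integral_const_mul, integral_indicator_ival]
  rw [show len I = Real.sqrt (len I) * Real.sqrt (len I) from (mul_self_sqrt_len I).symm]
  field_simp
  rw [Real.sqrt_sq (Real.sqrt_nonneg _), sq, mul_self_div_self]

lemma ip_haar_self (I : D) : ip (haar I) (haar I) = 1 := by
  unfold ip
  rw [show (fun x => haar I x * haar I x)
      = fun x => (len I)⁻¹ * (ival I).indicator (fun _ => (1:ℝ)) x from funext (haar_sq I)]
  rw [integral_const_mul, integral_indicator_ival]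
  field_simp [(len_pos I).ne']

lemma ip_haar1_self (I : D) : ip (haar1 I) (haar1 I) = 1 := by
  unfold ip
  rw [show (fun x => haar1 I x * haar1 I x)
      = fun x => (len I)⁻¹ * (ival I).indicator (fun _ => (1:ℝ)) x from funext (haar1_sq I)]
  rw [integral_const_mul, integral_indicator_ival]
  field_simp [(len_pos I).ne']

lemma ip_comm (f g : ℝ → ℝ) : ip f g = ip g f := by
  unfold ip
  congr 1
  funext x
  ring

/-- If `ival I ⊊ ival J` then `haar J` is constant on `ival I`. -/
lemma haar_const_on_nested {I J : D} (h : ival I ⊆ ival J) (hne : I ≠ J) :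
    ∃ c : ℝ, ∀ x ∈ ival I, haar J x = c := by
  have hscale : I.1 < J.1 := scale_lt_of_ssubset h hne
  have hlc : I.1 ≤ (lc J).1 := by simp only [lc]; omega
  have hrc : I.1 ≤ (rc J).1 := by simp only [rc]; omega
  rcases dichotomy_of_le hlc with hsub | hdis
  · exact ⟨-(Real.sqrt (len J))⁻¹, fun x hx => haar_eval_lc (hsub hx)⟩
  rcases dichotomy_of_le hrc with hsub' | hdis'
  · exact ⟨(Real.sqrt (len J))⁻¹, fun x hx => haar_eval_rc (hsub' hx)⟩
  · exfalso
    obtain ⟨x, hx⟩ := ival_nonempty I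
    rcases (halves_union J ▸ h hx : x ∈ ival (lc J) ∪ ival (rc J)) with h1 | h1
    · exact hdis.ne_of_mem hx h1 rfl
    · exact hdis'.ne_of_mem hx h1 rfl

lemma ip_haar_nested {I J : D} (h : ival I ⊆ ival J) (hne : I ≠ J) :
    ip (haar I) (haar J) = 0 := by
  obtain ⟨c, hc⟩ := haar_const_on_nested h hne
  unfold ip
  rw [show (fun x => haar I x * haar J x) = fun x => c * haar I x by
    funext x
    by_cases hx : x ∈ ival I
    · rw [hc x hx]; ring
    · rw [haar_support hx]; ring]
  rw [integral_const_mul, integral_haar]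
  ring

lemma ip_haar_disjoint {I J : D} (h : Disjoint (ival I) (ival J)) :
    ip (haar I) (haar J) = 0 := by
  unfold ip
  rw [show (fun x => haar I x * haar J x) = fun _ => (0:ℝ) by
    funext x
    by_cases hx : x ∈ ival I
    · rw [haar_support (fun hx' => h.ne_of_mem hx hx' rfl)]; ring
    · rw [haar_support hx]; ring]
  exact integral_zero _ _

lemma haar_orthogonal {I J : D} (hne : I ≠ J) : ip (haar I) (haar J) = 0 := by
  rcases dichotomy I J with h | h | h
  · exact ip_haar_nested h hne
  · rw [ip_comm]; exact ip_haar_nested h (Ne.symm hne)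
  · exact ip_haar_disjoint h

lemma ip_haar1_nested {I J : D} (h : ival I ⊆ ival J) :
    ip (haar1 I) (haar1 J) = Real.sqrt (len I) / Real.sqrt (len J) := by
  unfold ip
  rw [show (fun x => haar1 I x * haar1 J x) = fun x => (Real.sqrt (len J))⁻¹ * haar1 I x by
    funext x
    by_cases hx : x ∈ ival I
    · rw [haar1_eval (h hx)]; ring
    · rw [haar1_support hx]; ring]
  rw [integral_const_mul, integral_haar1]
  rw [div_eq_inv_mul]

variable {μ : Measure (D → ℝ)}

lemma integrable_dirac' {α : Type*} [MeasurableSpace α] [MeasurableSingletonClass α]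
    {f : α → ℝ} (a : α) : Integrable f (Measure.dirac a) := by
  refine (integrable_const (f a)).congr ?_
  rw [Filter.EventuallyEq, ae_dirac_eq]
  exact Filter.eventually_pure.2 rfl

lemma sign_ae (hμ : IsSignMeasure μ) (I : D) : ∀ᵐ σ ∂μ, σ I = 1 ∨ σ I = -1 := by
  have hmeas : Measurable (fun σ : D → ℝ => σ I) := measurable_pi_apply I
  have hset : MeasurableSet ({1, -1}ᶜ : Set ℝ) :=
    (MeasurableSet.insert (measurableSet_singleton _) 1).compl
  have h0 : μ ((fun σ : D → ℝ => σ I) ⁻¹' ({1, -1}ᶜ : Set ℝ)) = 0 := by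
    rw [← Measure.map_apply hmeas hset, hμ.2.2 I]
    simp only [Measure.smul_apply, Measure.add_apply, Measure.dirac_apply' _ hset]
    rw [Set.indicator_of_notMem, Set.indicator_of_notMem]
    · simp
    · simp
    · simp
  have : ∀ᵐ σ ∂μ, ¬ (σ I ∈ ({1, -1}ᶜ : Set ℝ)) := by
    rw [ae_iff]
    convert h0 using 2
    ext σ
    simp [Set.preimage]
  filter_upwards [this] with σ hσ
  have : σ I ∈ ({1, -1} : Set ℝ) := not_not.1 hσ
  simpa [Set.mem_insert_iff] using this

lemma integrable_sign_mul (hμ : IsSignMeasure μ) (I J : D) :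
    Integrable (fun σ : D → ℝ => σ I * σ J) μ := by
  have : IsProbabilityMeasure μ := hμ.1
  refine Integrable.mono' (integrable_const 1)
    (((measurable_pi_apply I).mul (measurable_pi_apply J)).aestronglyMeasurable) ?_
  filter_upwards [sign_ae hμ I, sign_ae hμ J] with σ h1 h2
  rcases h1 with h1 | h1 <;> rcases h2 with h2 | h2 <;> simp [h1, h2]

lemma sign_integral_eval (hμ : IsSignMeasure μ) (I : D) : ∫ σ, σ I ∂μ = 0 := by
  have hmeas : Measurable (fun σ : D → ℝ => σ I) := measurable_pi_apply I
  have h : ∫ σ, σ I ∂μ = ∫ x, x ∂(μ.map (fun σ => σ I)) := by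
    rw [integral_map hmeas.aemeasurable]
    exact aestronglyMeasurable_id
  rw [h, hμ.2.2 I, integral_smul_measure,
    integral_add_measure (integrable_dirac' _)
      (integrable_dirac' _)]
  simp [integral_dirac]

lemma sign_integral_sq (hμ : IsSignMeasure μ) (I : D) : ∫ σ, σ I * σ I ∂μ = 1 := by
  have hmeas : Measurable (fun σ : D → ℝ => σ I) := measurable_pi_apply I
  have h : ∫ σ, σ I * σ I ∂μ = ∫ x, x * x ∂(μ.map (fun σ => σ I)) := by
    rw [integral_map hmeas.aemeasurable]
    exact (measurable_id.mul measurable_id).aestronglyMeasurable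
  rw [h, hμ.2.2 I, integral_smul_measure,
    integral_add_measure (integrable_dirac' _)
      (integrable_dirac' _)]
  rw [integral_dirac (fun x : ℝ => x * x) 1, integral_dirac (fun x : ℝ => x * x) (-1)]
  norm_num [ENNReal.toReal_inv]

lemma sign_second_moment (hμ : IsSignMeasure μ) (I J : D) :
    ∫ σ, σ I * σ J ∂μ = if I = J then 1 else 0 := by
  by_cases h : I = J
  · rw [if_pos h, h]; exact sign_integral_sq hμ J
  · rw [if_neg h]
    have hind : IndepFun (fun σ : D → ℝ => σ I) (fun σ : D → ℝ => σ J) μ :=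
      hμ.2.1.indepFun h
    have := hind.integral_mul_eq_mul_integral (measurable_pi_apply I).aestronglyMeasurable
      (measurable_pi_apply J).aestronglyMeasurable
    have heq : ∫ σ, σ I * σ J ∂μ
        = ∫ σ, ((fun σ : D → ℝ => σ I) * fun σ : D → ℝ => σ J) σ ∂μ := rfl
    rw [heq, this, sign_integral_eval hμ I, sign_integral_eval hμ J]
    ring

lemma ip_haar (I J : D) : ip (haar I) (haar J) = if I = J then 1 else 0 := by
  by_cases h : I = J
  · rw [if_pos h, h, ip_haar_self]
  · rw [if_neg h, haar_orthogonal h]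

lemma ip_psig_haar (σ : D → ℝ) (β : D →₀ ℝ) (f : ℝ → ℝ) (hf : MemLp f 2 volume) (J : D) :
    ip (Psig σ false true β f) (haar J) = σ J * β J * ip f (haar1 J) := by
  unfold ip Psig
  have hre : ∀ x : ℝ, (∑ I ∈ β.support, σ I * (β I * ip f (hfun true I) * hfun false I x)) * haar J x
      = ∑ I ∈ β.support, (σ I * (β I * ip f (haar1 I))) * (haar I x * haar J x) := by
    intro x
    rw [Finset.sum_mul]
    refine Finset.sum_congr rfl fun I _ => ?_
    show σ I * (β I * ip f (haar1 I) * haar I x) * haar J x = _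
    ring
  rw [show (fun x => (∑ I ∈ β.support, σ I * (β I * ip f (hfun true I) * hfun false I x)) * haar J x)
      = fun x => ∑ I ∈ β.support, (σ I * (β I * ip f (haar1 I))) * (haar I x * haar J x) from funext hre]
  rw [integral_finset_sum _ (fun I _ =>
    (integrable_mul_L2 (memℒp_haar' I) (memℒp_haar' J)).const_mul _)]
  have : ∀ I ∈ β.support, (∫ x, (σ I * (β I * ip f (haar1 I))) * (haar I x * haar J x))
      = if I = J then σ I * (β I * ip f (haar1 I)) else 0 := by
    intro I _
    rw [integral_const_mul]
    have : (∫ x, haar I x * haar J x) = if I = J then 1 else 0 := ip_haar I J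
    rw [this]
    by_cases h : I = J <;> simp [h]
  rw [Finset.sum_congr rfl this, Finset.sum_ite_eq' β.support J
    (fun I => σ I * (β I * ip f (haar1 I)))]
  by_cases h : J ∈ β.support
  · rw [if_pos h]; unfold ip; ring
  · rw [if_neg h, Finsupp.notMem_support_iff.1 h]; ring

lemma comp_eq (σ : D → ℝ) (b β : D →₀ ℝ) (f : ℝ → ℝ) (hf : MemLp f 2 volume) :
    P true false b (Psig σ false true β f)
      = fun x => ∑ J ∈ b.support, (σ J * (b J * β J * ip f (haar1 J))) * haar1 J x := by
  funext x
  unfold P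
  refine Finset.sum_congr rfl fun J _ => ?_
  show b J * ip (Psig σ false true β f) (haar J) * haar1 J x = _
  rw [ip_psig_haar σ β f hf J]
  ring

lemma l2normSq_sum (s : Finset D) (c : D → ℝ) :
    l2normSq (fun x => ∑ J ∈ s, c J * haar1 J x)
      = ∑ J ∈ s, ∑ K ∈ s, c J * c K * ip (haar1 J) (haar1 K) := by
  unfold l2normSq
  have hre : ∀ x : ℝ, (∑ J ∈ s, c J * haar1 J x) ^ 2
      = ∑ J ∈ s, ∑ K ∈ s, (c J * c K) * (haar1 J x * haar1 K x) := by
    intro x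
    rw [sq, Finset.sum_mul_sum]
    exact Finset.sum_congr rfl fun J _ => Finset.sum_congr rfl fun K _ => by ring
  rw [show (fun x => (∑ J ∈ s, c J * haar1 J x) ^ 2)
      = fun x => ∑ J ∈ s, ∑ K ∈ s, (c J * c K) * (haar1 J x * haar1 K x) from funext hre]
  rw [integral_finset_sum _ (fun J _ => integrable_finset_sum _ (fun K _ =>
    (integrable_mul_L2 (memℒp_haar1 J) (memℒp_haar1 K)).const_mul _))]
  refine Finset.sum_congr rfl fun J _ => ?_
  rw [integral_finset_sum _ (fun K _ =>
    (integrable_mul_L2 (memℒp_haar1 J) (memℒp_haar1 K)).const_mul _)]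
  refine Finset.sum_congr rfl fun K _ => ?_
  rw [integral_const_mul]
  rfl

/-- The key identity for the averaged squared norm. -/
lemma avg_identity {μ : Measure (D → ℝ)} (hμ : IsSignMeasure μ) (b β : D →₀ ℝ)
    (f : ℝ → ℝ) (hf : MemLp f 2 volume) :
    ∫ σ, l2normSq (P true false b (Psig σ false true β f)) ∂μ
      = ∑ J ∈ b.support, (b J * β J * ip f (haar1 J)) ^ 2 := by
  have h1 : ∀ σ : D → ℝ, l2normSq (P true false b (Psig σ false true β f))
      = ∑ J ∈ b.support, ∑ K ∈ b.support,
          (σ J * σ K) * ((b J * β J * ip f (haar1 J)) * (b K * β K * ip f (haar1 K))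
            * ip (haar1 J) (haar1 K)) := by
    intro σ
    rw [comp_eq σ b β f hf, l2normSq_sum b.support (fun J => σ J * (b J * β J * ip f (haar1 J)))]
    exact Finset.sum_congr rfl fun J _ => Finset.sum_congr rfl fun K _ => by ring
  rw [show (fun σ : D → ℝ => l2normSq (P true false b (Psig σ false true β f)))
      = fun σ => ∑ J ∈ b.support, ∑ K ∈ b.support,
          (σ J * σ K) * ((b J * β J * ip f (haar1 J)) * (b K * β K * ip f (haar1 K))
            * ip (haar1 J) (haar1 K)) from funext h1]
  rw [integral_finset_sum _ (fun J _ => integrable_finset_sum _ (fun K _ =>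
    (integrable_sign_mul hμ J K).mul_const _))]
  refine Finset.sum_congr rfl fun J hJ => ?_
  rw [integral_finset_sum _ (fun K _ => (integrable_sign_mul hμ J K).mul_const _)]
  have : ∀ K ∈ b.support, (∫ σ, (σ J * σ K) * ((b J * β J * ip f (haar1 J))
      * (b K * β K * ip f (haar1 K)) * ip (haar1 J) (haar1 K)) ∂μ)
      = if J = K then (b J * β J * ip f (haar1 J)) ^ 2 else 0 := by
    intro K _
    rw [integral_mul_const, sign_second_moment hμ J K]
    by_cases h : J = K
    · rw [if_pos h, if_pos h, ← h, ip_haar1_self J]; ring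
    · rw [if_neg h, if_neg h]; ring
  rw [Finset.sum_congr rfl this]
  have := Finset.sum_ite_eq b.support J (fun _ => (b J * β J * ip f (haar1 J)) ^ 2)
  rw [this, if_pos hJ]

/-! ### Generic helpers -/

lemma integrableOn_of_L2 {f : ℝ → ℝ} (hf : MemLp f 2 volume) {S : Set ℝ}
    (hS : volume S < ⊤) : IntegrableOn f S volume := by
  haveI : IsFiniteMeasure (volume.restrict S) := ⟨by rwa [Measure.restrict_apply_univ]⟩
  exact (hf.restrict S).integrable (by norm_num)

/-- predecessor value in a finite set of reals (0 if none). -/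
def prevv (V : Finset ℝ) (μ : ℝ) : ℝ := (V.filter (fun ν => ν < μ)).fold max 0 id

lemma prevv_nonneg (V : Finset ℝ) (μ : ℝ) : 0 ≤ prevv V μ :=
  (Finset.le_fold_max 0).2 (Or.inl le_rfl)

lemma prevv_le (V : Finset ℝ) {μ : ℝ} (h : 0 ≤ μ) : prevv V μ ≤ μ :=
  (Finset.fold_max_le μ).2 ⟨h, fun ν hν => le_of_lt (Finset.mem_filter.1 hν).2⟩

lemma le_prevv {V : Finset ℝ} {ν μ : ℝ} (hν : ν ∈ V) (h : ν < μ) : ν ≤ prevv V μ :=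
  (Finset.le_fold_max ν).2 (Or.inr ⟨ν, Finset.mem_filter.2 ⟨hν, h⟩, le_rfl⟩)

lemma tele_aux (φ : ℝ → ℝ) (hφ0 : φ 0 = 0) (V : Finset ℝ) (hpos : ∀ v ∈ V, 0 < v) :
    ∀ n : ℕ, ∀ lam, lam ∈ V → (V.filter (fun μ => μ ≤ lam)).card ≤ n →
      ∑ μ ∈ V.filter (fun μ => μ ≤ lam), (φ μ - φ (prevv V μ)) = φ lam := by
  intro n
  induction n with
  | zero =>
    intro lam hlam hcard
    exfalso
    have : lam ∈ V.filter (fun μ => μ ≤ lam) := Finset.mem_filter.2 ⟨hlam, le_rfl⟩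
    have := Finset.card_pos.2 ⟨lam, this⟩
    omega
  | succ n ih =>
    intro lam hlam hcard
    by_cases hW : (V.filter (fun ν => ν < lam)).Nonempty
    · obtain ⟨lam', hlam'mem, hlam'max⟩ :
          ∃ lam' ∈ V.filter (fun ν => ν < lam), ∀ ν ∈ V.filter (fun ν => ν < lam), ν ≤ lam' :=
        ⟨_, Finset.max'_mem _ hW, fun ν hν => Finset.le_max' _ ν hν⟩
      rw [Finset.mem_filter] at hlam'mem
      obtain ⟨hmem1, hmem2⟩ := hlam'mem
      have hprev : prevv V lam = lam' := by
        apply le_antisymm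
        · exact (Finset.fold_max_le lam').2 ⟨(hpos _ hmem1).le,
            fun ν hν => hlam'max ν hν⟩
        · exact le_prevv hmem1 hmem2
      have hsplit : V.filter (fun μ => μ ≤ lam) = insert lam (V.filter (fun μ => μ ≤ lam')) := by
        ext ν
        simp only [Finset.mem_filter, Finset.mem_insert]
        constructor
        · rintro ⟨hνV, hνlam⟩
          rcases eq_or_lt_of_le hνlam with h | h
          · exact Or.inl h
          · exact Or.inr ⟨hνV, hlam'max ν (Finset.mem_filter.2 ⟨hνV, h⟩)⟩
        · rintro (h | ⟨hνV, hν⟩)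
          · exact ⟨h ▸ hlam, h ▸ le_rfl⟩
          · exact ⟨hνV, hν.trans hmem2.le⟩
      have hnot : lam ∉ V.filter (fun μ => μ ≤ lam') := by
        simp only [Finset.mem_filter, not_and]
        intro _
        exact not_le.2 hmem2
      have hcard' : (V.filter (fun μ => μ ≤ lam')).card ≤ n := by
        have hss : V.filter (fun μ => μ ≤ lam') ⊂ V.filter (fun μ => μ ≤ lam) := by
          rw [hsplit]
          exact Finset.ssubset_insert hnot
        have := Finset.card_lt_card hss
        omega
      rw [hsplit, Finset.sum_insert hnot, hprev, ih lam' hmem1 hcard']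
      ring
    · have hempty : V.filter (fun ν => ν < lam) = ∅ := Finset.not_nonempty_iff_eq_empty.1 hW
      have hsingle : V.filter (fun μ => μ ≤ lam) = {lam} := by
        ext ν
        simp only [Finset.mem_filter, Finset.mem_singleton]
        constructor
        · rintro ⟨hνV, hνlam⟩
          rcases eq_or_lt_of_le hνlam with h | h
          · exact h
          · exfalso
            have hmem : ν ∈ V.filter (fun ν' => ν' < lam) := Finset.mem_filter.2 ⟨hνV, h⟩
            rw [hempty] at hmem
            exact Finset.notMem_empty ν hmem
        · rintro rfl
          exact ⟨hlam, le_rfl⟩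
      have hprev : prevv V lam = 0 := by
        unfold prevv
        rw [hempty]
        rfl
      rw [hsingle, Finset.sum_singleton, hprev, hφ0]
      ring

lemma telescope (φ : ℝ → ℝ) (hφ0 : φ 0 = 0) (V : Finset ℝ) (hpos : ∀ v ∈ V, 0 < v)
    {lam : ℝ} (hlam : lam ∈ V) :
    ∑ μ ∈ V.filter (fun μ => μ ≤ lam), (φ μ - φ (prevv V μ)) = φ lam :=
  tele_aux φ hφ0 V hpos _ lam hlam le_rfl

lemma exists_maximal_in {u : Finset D} {I : D} (hI : I ∈ u) :
    ∃ J ∈ u, ival I ⊆ ival J ∧ ∀ J' ∈ u, ival J ⊆ ival J' → J = J' := by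
  obtain ⟨J, hJmem, hJmax⟩ := Finset.exists_max_image (u.filter (fun J => ival I ⊆ ival J))
    (fun J => J.1) ⟨I, Finset.mem_filter.2 ⟨hI, subset_rfl⟩⟩
  obtain ⟨hJu, hIJ⟩ := Finset.mem_filter.1 hJmem
  refine ⟨J, hJu, hIJ, fun J' hJ' hsub => ?_⟩
  have hJ'f : J' ∈ u.filter (fun J => ival I ⊆ ival J) :=
    Finset.mem_filter.2 ⟨hJ', hIJ.trans hsub⟩
  exact eq_of_subset_same_scale hsub (le_antisymm (scale_le_of_subset hsub) (hJmax J' hJ'f))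

lemma sum_biUnion_le' (c : D → ℝ) (hc : ∀ i, 0 ≤ c i) (M : Finset D) (g : D → Finset D) :
    ∑ I ∈ M.biUnion g, c I ≤ ∑ J ∈ M, ∑ I ∈ g J, c I := by
  induction M using Finset.induction_on with
  | empty => simp
  | insert J M hJ ih =>
    rw [Finset.biUnion_insert, Finset.sum_insert hJ]
    have h2 : ∑ I ∈ g J ∪ M.biUnion g, c I + ∑ I ∈ (g J) ∩ (M.biUnion g), c I
        = ∑ I ∈ g J, c I + ∑ I ∈ M.biUnion g, c I := Finset.sum_union_inter
    have h3 : 0 ≤ ∑ I ∈ (g J) ∩ (M.biUnion g), c I := Finset.sum_nonneg (fun i _ => hc i)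
    linarith

lemma sum_le_biUnion (c : D → ℝ) (hc : ∀ i, 0 ≤ c i) (M : Finset D) (g : D → Finset D)
    (u : Finset D) (hcover : u ⊆ M.biUnion g) :
    ∑ I ∈ u, c I ≤ ∑ J ∈ M, ∑ I ∈ g J, c I :=
  (Finset.sum_le_sum_of_subset_of_nonneg hcover (fun i _ _ => hc i)).trans
    (sum_biUnion_le' c hc M g)

/-! ### The embedding theorem -/

theorem carleson_embedding_nonneg (s : Finset D) (a : D → ℝ) (K : ℝ)
    (hK : ∀ J : D, ∑ I ∈ s.filter (fun I => ival I ⊆ ival J), a I ^ 2 * len I ≤ K ^ 2 * len J)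
    (f : ℝ → ℝ) (hfm : Measurable f) (hf0 : ∀ x, 0 ≤ f x) (hf : MemLp f 2 volume) :
    ∑ I ∈ s, (a I * ip f (haar1 I)) ^ 2 ≤ 8 * K ^ 2 * ∫ x, f x ^ 2 := by
  classical
  set A : D → ℝ := fun I => (∫ x in ival I, f x) / len I with hA
  set c : D → ℝ := fun I => a I ^ 2 * len I with hc
  have hc0 : ∀ I, 0 ≤ c I := fun I => mul_nonneg (sq_nonneg _) (len_pos I).le
  set t : Finset D := s.filter (fun I => 0 < A I) with ht
  set V : Finset ℝ := t.image A with hV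
  have hVpos : ∀ v ∈ V, 0 < v := by
    intro v hv
    obtain ⟨I, hI, rfl⟩ := Finset.mem_image.1 hv
    exact (Finset.mem_filter.1 hI).2
  have hA0 : ∀ I, 0 ≤ A I := fun I =>
    div_nonneg (setIntegral_nonneg (measurableSet_ival' I) (fun x _ => hf0 x)) (len_pos I).le
  -- ip in terms of averages
  have hipA : ∀ I : D, ip f (haar1 I) = Real.sqrt (len I) * A I := by
    intro I
    have h1 : (fun x => f x * haar1 I x)
        = fun x => (Real.sqrt (len I))⁻¹ * (ival I).indicator f x := by
      funext x
      unfold haar1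
      by_cases hx : x ∈ ival I
      · rw [Set.indicator_of_mem hx, Set.indicator_of_mem hx]; ring
      · rw [Set.indicator_of_notMem hx, Set.indicator_of_notMem hx]; ring
    rw [ip, h1, integral_const_mul, integral_indicator (measurableSet_ival' I)]
    simp only [hA]
    rw [show len I = Real.sqrt (len I) * Real.sqrt (len I) from (mul_self_sqrt_len I).symm]
    field_simp
    rw [Real.sqrt_sq (Real.sqrt_nonneg _), sq, mul_div_mul_left _ _ (sqrt_len_pos I).ne']
  -- Step 0: rewrite the sum
  have step0 : ∑ I ∈ s, (a I * ip f (haar1 I)) ^ 2 = ∑ I ∈ s, c I * A I ^ 2 := by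
    refine Finset.sum_congr rfl fun I _ => ?_
    rw [hipA I]
    simp only [hc]
    rw [mul_pow, mul_pow, Real.sq_sqrt (len_pos I).le]
    ring
  -- Step 1: restrict to t
  have step1 : ∑ I ∈ s, c I * A I ^ 2 = ∑ I ∈ t, c I * A I ^ 2 := by
    refine (Finset.sum_subset (Finset.filter_subset _ _) ?_).symm
    intro I hIs hIt
    have : ¬ 0 < A I := fun h => hIt (Finset.mem_filter.2 ⟨hIs, h⟩)
    have hAI : A I = 0 := le_antisymm (not_lt.1 this) (hA0 I)
    rw [hAI]
    ring
  -- the level sets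
  set E : ℝ → Set ℝ := fun μ => {x | μ < 2 * f x} with hE
  have hEm : ∀ μ, MeasurableSet (E μ) := fun μ =>
    measurableSet_lt measurable_const (hfm.const_mul 2)
  have hEfin : ∀ μ ∈ V, volume (E μ) < ⊤ := by
    intro μ hμ
    have hμpos := hVpos μ hμ
    have hsub : E μ ⊆ {x | ENNReal.ofReal (μ / 2) ≤ (‖f x‖₊ : ℝ≥0∞)} := by
      intro x hx
      have hx' : μ / 2 < f x := by
        simp only [hE, Set.mem_setOf_eq] at hx
        linarith
      simp only [Set.mem_setOf_eq]
      rw [← enorm_eq_nnnorm, Real.enorm_eq_ofReal (hf0 x)]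
      exact ENNReal.ofReal_le_ofReal hx'.le
    have hcheb := meas_ge_le_mul_pow_eLpNorm_enorm volume (by norm_num : (2:ℝ≥0∞) ≠ 0)
      (by norm_num : (2:ℝ≥0∞) ≠ ⊤) hf.1
      (ε := ENNReal.ofReal (μ / 2)) (by simp [ENNReal.ofReal_eq_zero]; linarith) (by simp)
    calc volume (E μ) ≤ volume {x | ENNReal.ofReal (μ / 2) ≤ (‖f x‖₊ : ℝ≥0∞)} :=
        measure_mono hsub
      _ ≤ (ENNReal.ofReal (μ / 2))⁻¹ ^ (2:ℝ≥0∞).toReal * eLpNorm f 2 volume ^ (2:ℝ≥0∞).toReal :=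
        hcheb
      _ < ⊤ := by
        refine ENNReal.mul_lt_top ?_ ?_
        · refine ENNReal.rpow_lt_top_of_nonneg (by norm_num) ?_
          rw [ENNReal.inv_ne_top]
          simp only [ne_eq, ENNReal.ofReal_eq_zero, not_le]
          linarith
        · exact ENNReal.rpow_lt_top_of_nonneg (by norm_num) hf.2.ne

  have hVmem : ∀ I ∈ t, A I ∈ V := fun I hI => Finset.mem_image_of_mem A hI
  set Δ : ℝ → ℝ := fun μ => μ ^ 2 - (prevv V μ) ^ 2 with hΔ
  have hΔ0 : ∀ μ ∈ V, 0 ≤ Δ μ := by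
    intro μ hμ
    have h1 : prevv V μ ≤ μ := prevv_le V (hVpos μ hμ).le
    have h2 : 0 ≤ prevv V μ := prevv_nonneg V μ
    simp only [hΔ]
    nlinarith
  -- Step 2 : layer-cake decomposition
  have step2 : ∑ I ∈ t, c I * A I ^ 2
      = ∑ μ ∈ V, Δ μ * ∑ I ∈ t.filter (fun I => μ ≤ A I), c I := by
    have h1 : ∀ I ∈ t, c I * A I ^ 2 = ∑ μ ∈ V, (if μ ≤ A I then c I * Δ μ else 0) := by
      intro I hI
      rw [← Finset.sum_filter]
      have htel : ∑ μ ∈ V.filter (fun μ => μ ≤ A I), (μ ^ 2 - (prevv V μ) ^ 2) = A I ^ 2 := by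
        simpa using telescope (fun x => x ^ 2) (by norm_num) V hVpos (hVmem I hI)
      calc c I * A I ^ 2
          = c I * ∑ μ ∈ V.filter (fun μ => μ ≤ A I), (μ ^ 2 - (prevv V μ) ^ 2) := by rw [htel]
        _ = ∑ μ ∈ V.filter (fun μ => μ ≤ A I), c I * Δ μ := by
            rw [Finset.mul_sum]
    rw [Finset.sum_congr rfl h1, Finset.sum_comm]
    refine Finset.sum_congr rfl fun μ _ => ?_
    rw [← Finset.sum_filter, Finset.mul_sum]
    exact Finset.sum_congr rfl fun I _ => mul_comm _ _
  -- Steps 3 and 4 : Carleson condition on maximal intervals plus weak-type bound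
  have step34 : ∀ μ ∈ V, Δ μ * ∑ I ∈ t.filter (fun I => μ ≤ A I), c I
      ≤ Δ μ * (K ^ 2 * ((2 / μ) * ∫ x, (E μ).indicator f x)) := by
    intro μ hμ
    refine mul_le_mul_of_nonneg_left ?_ (hΔ0 μ hμ)
    have hμpos := hVpos μ hμ
    set u := t.filter (fun I => μ ≤ A I) with hu
    set M := u.filter (fun J => ∀ J' ∈ u, ival J ⊆ ival J' → J = J') with hM
    have hMu : M ⊆ u := Finset.filter_subset _ _
    have hcover : u ⊆ M.biUnion (fun J => u.filter (fun I => ival I ⊆ ival J)) := by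
      intro I hI
      obtain ⟨J, hJu, hIJ, hmax⟩ := exists_maximal_in hI
      exact Finset.mem_biUnion.2 ⟨J, Finset.mem_filter.2 ⟨hJu, hmax⟩,
        Finset.mem_filter.2 ⟨hI, hIJ⟩⟩
    have h3 : ∑ I ∈ u, c I ≤ K ^ 2 * ∑ J ∈ M, len J := by
      calc ∑ I ∈ u, c I
          ≤ ∑ J ∈ M, ∑ I ∈ u.filter (fun I => ival I ⊆ ival J), c I :=
            sum_le_biUnion c hc0 M _ u hcover
        _ ≤ ∑ J ∈ M, K ^ 2 * len J := by
            refine Finset.sum_le_sum fun J _ => ?_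
            have hus : u ⊆ s := (Finset.filter_subset _ _).trans (Finset.filter_subset _ _)
            have hsubs : u.filter (fun I => ival I ⊆ ival J) ⊆
                s.filter (fun I => ival I ⊆ ival J) := Finset.filter_subset_filter _ hus
            exact le_trans
              (Finset.sum_le_sum_of_subset_of_nonneg hsubs fun i _ _ => hc0 i) (hK J)
        _ = K ^ 2 * ∑ J ∈ M, len J := by rw [Finset.mul_sum]
    have hdisj : (M : Set D).Pairwise (fun J J' => Disjoint (ival J) (ival J')) := by
      intro J hJ J' hJ' hne
      have hJm : J ∈ M := Finset.mem_coe.1 hJ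
      have hJ'm : J' ∈ M := Finset.mem_coe.1 hJ'
      have hmaxJ : ∀ L ∈ u, ival J ⊆ ival L → J = L := (Finset.mem_filter.1 hJm).2
      have hmaxJ' : ∀ L ∈ u, ival J' ⊆ ival L → J' = L := (Finset.mem_filter.1 hJ'm).2
      rcases dichotomy J J' with h | h | h
      · exact absurd (hmaxJ J' (hMu hJ'm) h) hne
      · exact absurd (hmaxJ' J (hMu hJm) h).symm hne
      · exact h
    have hfE : Integrable ((E μ).indicator f) volume :=
      (integrableOn_of_L2 hf (hEfin μ hμ)).integrable_indicator (hEm μ)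
    have hweak : ∀ J ∈ M, len J ≤ (2 / μ) * ∫ x in ival J, (E μ).indicator f x := by
      intro J hJ
      have hAJ : μ ≤ A J := (Finset.mem_filter.1 (hMu hJ)).2
      have hintJ : IntegrableOn f (ival J) volume := integrableOn_of_L2 hf (volume_ival_lt_top J)
      have hint1 : IntegrableOn ((E μ).indicator f) (ival J) volume := hintJ.indicator (hEm μ)
      have hint2 : IntegrableOn ((E μ)ᶜ.indicator f) (ival J) volume :=
        hintJ.indicator (hEm μ).compl
      have hsplit : ∫ x in ival J, f x
          = (∫ x in ival J, (E μ).indicator f x) + ∫ x in ival J, (E μ)ᶜ.indicator f x := by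
        rw [← integral_add hint1 hint2]
        apply integral_congr_ae
        apply Filter.Eventually.of_forall
        intro x
        exact (congrFun (Set.indicator_self_add_compl (E μ) f) x).symm
      have hbound : ∫ x in ival J, (E μ)ᶜ.indicator f x ≤ (μ / 2) * len J := by
        have hmono : ∀ x ∈ ival J, (E μ)ᶜ.indicator f x ≤ μ / 2 := by
          intro x _
          by_cases hx : x ∈ (E μ)ᶜ
          · rw [Set.indicator_of_mem hx]
            simp only [hE, Set.mem_compl_iff, Set.mem_setOf_eq, not_lt] at hx
            linarith
          · rw [Set.indicator_of_notMem hx]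
            linarith
        calc ∫ x in ival J, (E μ)ᶜ.indicator f x
            ≤ ∫ _x in ival J, (μ / 2) :=
              setIntegral_mono_on hint2
                (integrableOn_const (volume_ival_lt_top J).ne)
                (measurableSet_ival' J) hmono
          _ = (μ / 2) * len J := by
              rw [setIntegral_const, measureReal_def, volume_ival, ENNReal.toReal_ofReal (len_pos J).le,
                smul_eq_mul]
              ring
      have hAJ' : μ * len J ≤ ∫ x in ival J, f x := by
        simp only [hA] at hAJ
        exact (le_div_iff₀ (len_pos J)).1 hAJ
      have hQ : (μ / 2) * len J ≤ ∫ x in ival J, (E μ).indicator f x := by linarith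
      calc len J = (2 / μ) * ((μ / 2) * len J) := by field_simp
        _ ≤ (2 / μ) * ∫ x in ival J, (E μ).indicator f x :=
            mul_le_mul_of_nonneg_left hQ (by positivity)
    have hsum : ∑ J ∈ M, ∫ x in ival J, (E μ).indicator f x ≤ ∫ x, (E μ).indicator f x := by
      rw [← integral_biUnion_finset M (fun _ _ => measurableSet_ival' _) hdisj
        (fun J _ => hfE.integrableOn)]
      exact setIntegral_le_integral hfE
        (Filter.Eventually.of_forall fun x => Set.indicator_nonneg (fun y _ => hf0 y) x)
    calc ∑ I ∈ u, c I ≤ K ^ 2 * ∑ J ∈ M, len J := h3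
      _ ≤ K ^ 2 * ((2 / μ) * ∫ x, (E μ).indicator f x) := by
          refine mul_le_mul_of_nonneg_left ?_ (sq_nonneg K)
          calc ∑ J ∈ M, len J
              ≤ ∑ J ∈ M, (2 / μ) * ∫ x in ival J, (E μ).indicator f x :=
                Finset.sum_le_sum hweak
            _ = (2 / μ) * ∑ J ∈ M, ∫ x in ival J, (E μ).indicator f x := by
                rw [Finset.mul_sum]
            _ ≤ (2 / μ) * ∫ x, (E μ).indicator f x :=
                mul_le_mul_of_nonneg_left hsum (by positivity)
  -- Step 5 : maximal-function type bound
  have hterm_int : ∀ μ ∈ V, Integrable (fun x => (2 * Δ μ / μ) * (E μ).indicator f x) volume :=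
    fun μ hμ => ((integrableOn_of_L2 hf (hEfin μ hμ)).integrable_indicator (hEm μ)).const_mul _
  have hptwise : ∀ x : ℝ, ∑ μ ∈ V, (2 * Δ μ / μ) * (E μ).indicator f x ≤ 8 * f x ^ 2 := by
    intro x
    have hfx := hf0 x
    have hform : ∀ μ ∈ V, (2 * Δ μ / μ) * (E μ).indicator f x
        = (if μ < 2 * f x then (2 * Δ μ / μ) else 0) * f x := by
      intro μ _
      by_cases hx : μ < 2 * f x
      · rw [if_pos hx, Set.indicator_of_mem (by exact hx : x ∈ E μ)]
      · rw [if_neg hx, Set.indicator_of_notMem (by exact hx : x ∉ E μ)]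
        ring
    rw [Finset.sum_congr rfl hform, ← Finset.sum_mul, ← Finset.sum_filter]
    by_cases hWne : (V.filter (fun μ => μ < 2 * f x)).Nonempty
    · have hmem := Finset.max'_mem _ hWne
      set y := (V.filter (fun μ => μ < 2 * f x)).max' hWne with hy
      rw [Finset.mem_filter] at hmem
      have hWeq : V.filter (fun μ => μ < 2 * f x) = V.filter (fun μ => μ ≤ y) := by
        ext ν
        simp only [Finset.mem_filter]
        constructor
        · rintro ⟨h1, h2⟩
          refine ⟨h1, ?_⟩
          rw [hy]
          exact Finset.le_max' _ ν
            (Finset.mem_filter.2 ⟨h1, h2⟩ : ν ∈ V.filter (fun μ => μ < 2 * f x))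
        · rintro ⟨h1, h2⟩
          exact ⟨h1, lt_of_le_of_lt h2 hmem.2⟩
      have htel : ∑ μ ∈ V.filter (fun μ => μ ≤ y), (μ - prevv V μ) = y := by
        simpa using telescope (fun x => x) rfl V hVpos hmem.1
      have hterm : ∀ μ ∈ V.filter (fun μ => μ < 2 * f x),
          2 * Δ μ / μ ≤ 4 * (μ - prevv V μ) := by
        intro μ hμW
        have hμV : μ ∈ V := (Finset.mem_filter.1 hμW).1
        have hμpos := hVpos μ hμV
        have hp1 : prevv V μ ≤ μ := prevv_le V hμpos.le
        have hp0 : 0 ≤ prevv V μ := prevv_nonneg V μ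
        rw [div_le_iff₀ hμpos]
        simp only [hΔ]
        nlinarith
      have hsum4 : ∑ μ ∈ V.filter (fun μ => μ < 2 * f x), 2 * Δ μ / μ ≤ 4 * y := by
        calc ∑ μ ∈ V.filter (fun μ => μ < 2 * f x), 2 * Δ μ / μ
            ≤ ∑ μ ∈ V.filter (fun μ => μ < 2 * f x), 4 * (μ - prevv V μ) :=
              Finset.sum_le_sum hterm
          _ = 4 * ∑ μ ∈ V.filter (fun μ => μ ≤ y), (μ - prevv V μ) := by
              rw [hWeq, Finset.mul_sum]
          _ = 4 * y := by rw [htel]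
      have h5 : (∑ μ ∈ V.filter (fun μ => μ < 2 * f x), 2 * Δ μ / μ) * f x
          ≤ (4 * y) * f x := mul_le_mul_of_nonneg_right hsum4 hfx
      nlinarith [hmem.2, hfx]
    · rw [Finset.not_nonempty_iff_eq_empty.1 hWne]
      simp
      positivity
  -- Final assembly
  have final : ∑ μ ∈ V, Δ μ * (K ^ 2 * ((2 / μ) * ∫ x, (E μ).indicator f x))
      ≤ 8 * K ^ 2 * ∫ x, f x ^ 2 := by
    have h1 : ∑ μ ∈ V, Δ μ * (K ^ 2 * ((2 / μ) * ∫ x, (E μ).indicator f x))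
        = K ^ 2 * ∑ μ ∈ V, ∫ x, (2 * Δ μ / μ) * (E μ).indicator f x := by
      rw [Finset.mul_sum]
      refine Finset.sum_congr rfl fun μ hμ => ?_
      rw [integral_const_mul]
      ring
    rw [h1, ← integral_finset_sum V hterm_int]
    have h3 : ∫ x, (∑ μ ∈ V, (2 * Δ μ / μ) * (E μ).indicator f x)
        ≤ ∫ x, 8 * f x ^ 2 :=
      integral_mono (integrable_finset_sum V hterm_int) (hf.integrable_sq.const_mul 8) hptwise
    calc K ^ 2 * ∫ x, (∑ μ ∈ V, (2 * Δ μ / μ) * (E μ).indicator f x)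
        ≤ K ^ 2 * ∫ x, 8 * f x ^ 2 := mul_le_mul_of_nonneg_left h3 (sq_nonneg K)
      _ = 8 * K ^ 2 * ∫ x, f x ^ 2 := by rw [integral_const_mul]; ring
  calc ∑ I ∈ s, (a I * ip f (haar1 I)) ^ 2
      = ∑ I ∈ t, c I * A I ^ 2 := by rw [step0, step1]
    _ = ∑ μ ∈ V, Δ μ * ∑ I ∈ t.filter (fun I => μ ≤ A I), c I := step2
    _ ≤ ∑ μ ∈ V, Δ μ * (K ^ 2 * ((2 / μ) * ∫ x, (E μ).indicator f x)) :=
        Finset.sum_le_sum step34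
    _ ≤ 8 * K ^ 2 * ∫ x, f x ^ 2 := final

/-! ### new lemmas -/

lemma haar1_nonneg (I : D) (x : ℝ) : 0 ≤ haar1 I x := by
  unfold haar1
  refine mul_nonneg (inv_nonneg.2 (Real.sqrt_nonneg _)) ?_
  exact Set.indicator_nonneg (fun _ _ => zero_le_one) x

lemma integral_sq_eq_norm {f : ℝ → ℝ} (hf : MemLp f 2 volume) :
    ∫ x, f x ^ 2 = ((eLpNorm f 2 volume).toReal) ^ 2 := by
  set F := hf.toLp f with hF
  have h1 : ∫ x, f x ^ 2 = ∫ x, (F : ℝ → ℝ) x * (F : ℝ → ℝ) x := by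
    refine integral_congr_ae ?_
    filter_upwards [hf.coeFn_toLp] with x hx
    rw [hx, sq]
  have h2 : (inner ℝ F F : ℝ) = ∫ x, (F : ℝ → ℝ) x * (F : ℝ → ℝ) x := by
    rw [L2.inner_def]
    refine integral_congr_ae (Filter.Eventually.of_forall fun x => ?_)
    simp [RCLike.inner_apply, starRingEnd_apply, sq]
  have h3 : (inner ℝ F F : ℝ) = ‖F‖ ^ 2 := real_inner_self_eq_norm_sq F
  rw [h1, ← h2, h3, Lp.norm_toLp f hf]

lemma carleson_embedding (s : Finset D) (a : D → ℝ) (K : ℝ)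
    (hK : ∀ J : D, ∑ I ∈ s.filter (fun I => ival I ⊆ ival J), a I ^ 2 * len I ≤ K ^ 2 * len J)
    (f : ℝ → ℝ) (hf : MemLp f 2 volume) :
    ∑ I ∈ s, (a I * ip f (haar1 I)) ^ 2 ≤ 8 * K ^ 2 * ∫ x, f x ^ 2 := by
  set m : ℝ → ℝ := hf.1.mk f with hm
  have hmeq : f =ᵐ[volume] m := hf.1.ae_eq_mk
  have hmm : MemLp m 2 volume := hf.ae_eq hmeq
  set g : ℝ → ℝ := fun x => |m x| with hg
  have hgm : Measurable g := hf.1.stronglyMeasurable_mk.measurable.abs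
  have hg0 : ∀ x, 0 ≤ g x := fun x => abs_nonneg _
  have hgl : MemLp g 2 volume := by
    have := hmm.norm
    simpa [Real.norm_eq_abs] using this
  have key := carleson_embedding_nonneg s a K hK g hgm hg0 hgl
  have hsq : ∫ x, g x ^ 2 = ∫ x, f x ^ 2 := by
    refine integral_congr_ae ?_
    filter_upwards [hmeq] with x hx
    rw [hg]
    simp only [sq_abs]
    rw [hx]
  rw [hsq] at key
  refine le_trans ?_ key
  refine Finset.sum_le_sum fun I _ => ?_
  have hipf : ip f (haar1 I) = ip m (haar1 I) := by
    refine integral_congr_ae ?_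
    filter_upwards [hmeq] with x hx
    rw [hx]
  have habs : |ip m (haar1 I)| ≤ ip g (haar1 I) := by
    have hint1 : Integrable (fun x => m x * haar1 I x) volume :=
      integrable_mul_L2 hmm (memℒp_haar1 I)
    have hint2 : Integrable (fun x => g x * haar1 I x) volume :=
      integrable_mul_L2 hgl (memℒp_haar1 I)
    rw [abs_le]
    constructor
    · rw [← neg_le]
      rw [show -ip m (haar1 I) = ∫ x, -(m x * haar1 I x) from by rw [integral_neg]; rfl]
      refine integral_mono hint1.neg hint2 fun x => ?_
      rw [← neg_mul]
      exact mul_le_mul_of_nonneg_right (neg_le_abs (m x)) (haar1_nonneg I x)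
    · refine integral_mono hint1 hint2 fun x => ?_
      exact mul_le_mul_of_nonneg_right (le_abs_self (m x)) (haar1_nonneg I x)
  have h2 : (ip f (haar1 I)) ^ 2 ≤ (ip g (haar1 I)) ^ 2 := by
    rw [hipf, ← sq_abs (ip m (haar1 I))]
    have h0 : (0:ℝ) ≤ |ip m (haar1 I)| := abs_nonneg _
    exact pow_le_pow_left₀ h0 habs 2
  rw [mul_pow, mul_pow]
  exact mul_le_mul_of_nonneg_left h2 (sq_nonneg (a I))


lemma unit_haar1 (I : D) : UnitL2 (haar1 I) := by
  refine ⟨memℒp_haar1 I, ?_⟩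
  have h1 : ((eLpNorm (haar1 I) 2 volume).toReal) ^ 2 = 1 := by
    rw [← integral_sq_eq_norm (memℒp_haar1 I)]
    calc ∫ x, haar1 I x ^ 2 = ip (haar1 I) (haar1 I) := by
          unfold ip
          congr 1
          funext x
          rw [sq]
      _ = 1 := ip_haar1_self I
  have h2 : (eLpNorm (haar1 I) 2 volume).toReal = 1 := by
    nlinarith [ENNReal.toReal_nonneg (a := eLpNorm (haar1 I) 2 volume)]
  exact (ENNReal.toReal_eq_one_iff _).1 h2

instance : Nonempty {f : ℝ → ℝ // UnitL2 f} := ⟨⟨haar1 (0, 0), unit_haar1 _⟩⟩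


/-- The averaged operator norm of `P^{1,0}_b P^{σ,0,1}_β` is equivalent to
the Carleson norm of the product sequence `{b_I β_I}`. -/
theorem statement4 :
    ∃ c C : ℝ, 0 < c ∧ 0 < C ∧ ∀ (b β : D →₀ ℝ) (μ : Measure (D → ℝ)), IsSignMeasure μ →
      c * carlOn (b.support ∩ β.support) (fun I => b I * β I) ≤
        avgOpNorm μ (fun σ f => P true false b (Psig σ false true β f)) ∧
      avgOpNorm μ (fun σ f => P true false b (Psig σ false true β f)) ≤
        C * carlOn (b.support ∩ β.support) (fun I => b I * β I) := by
  refine ⟨1, 3, one_pos, by norm_num, ?_⟩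
  intro b β μ hμ
  have hq0 : ∀ J : D, 0 ≤ (len J)⁻¹ * ∑ I ∈ (b.support ∩ β.support).filter
      (fun I => ival I ⊆ ival J), (b I * β I) ^ 2 * len I :=
    fun J => mul_nonneg (inv_nonneg.2 (len_pos J).le)
      (Finset.sum_nonneg fun I _ => mul_nonneg (sq_nonneg _) (len_pos I).le)
  -- boundedness of the Carleson sup
  have hbdd : ∀ J : D, Real.sqrt ((len J)⁻¹ * ∑ I ∈ (b.support ∩ β.support).filter
      (fun I => ival I ⊆ ival J), (b I * β I) ^ 2 * len I)
      ≤ Real.sqrt (∑ I ∈ b.support ∩ β.support, (b I * β I) ^ 2) := by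
    intro J
    apply Real.sqrt_le_sqrt
    have h1 : (∑ I ∈ (b.support ∩ β.support).filter (fun I => ival I ⊆ ival J),
        (b I * β I) ^ 2 * len I)
        ≤ (∑ I ∈ (b.support ∩ β.support).filter (fun I => ival I ⊆ ival J),
          (b I * β I) ^ 2) * len J := by
      rw [Finset.sum_mul]
      refine Finset.sum_le_sum fun I hI => ?_
      exact mul_le_mul_of_nonneg_left (len_le_of_subset (Finset.mem_filter.1 hI).2) (sq_nonneg _)
    have h2 : (∑ I ∈ (b.support ∩ β.support).filter (fun I => ival I ⊆ ival J),
        (b I * β I) ^ 2) ≤ ∑ I ∈ b.support ∩ β.support, (b I * β I) ^ 2 :=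
      Finset.sum_le_sum_of_subset_of_nonneg (Finset.filter_subset _ _)
        (fun i _ _ => sq_nonneg _)
    calc (len J)⁻¹ * ∑ I ∈ (b.support ∩ β.support).filter (fun I => ival I ⊆ ival J),
          (b I * β I) ^ 2 * len I
        ≤ (len J)⁻¹ * ((∑ I ∈ (b.support ∩ β.support).filter (fun I => ival I ⊆ ival J),
          (b I * β I) ^ 2) * len J) :=
          mul_le_mul_of_nonneg_left h1 (inv_nonneg.2 (len_pos J).le)
      _ = ∑ I ∈ (b.support ∩ β.support).filter (fun I => ival I ⊆ ival J), (b I * β I) ^ 2 := by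
          rw [mul_comm ((len J)⁻¹) _, mul_assoc, mul_inv_cancel₀ (len_pos J).ne', mul_one]
      _ ≤ ∑ I ∈ b.support ∩ β.support, (b I * β I) ^ 2 := h2
  have hbddA : BddAbove (Set.range fun J : D => Real.sqrt ((len J)⁻¹ *
      ∑ I ∈ (b.support ∩ β.support).filter (fun I => ival I ⊆ ival J),
        (b I * β I) ^ 2 * len I)) :=
    ⟨Real.sqrt (∑ I ∈ b.support ∩ β.support, (b I * β I) ^ 2), by
      rintro x ⟨J, rfl⟩; exact hbdd J⟩
  have hK_le : ∀ J : D, Real.sqrt ((len J)⁻¹ * ∑ I ∈ (b.support ∩ β.support).filter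
      (fun I => ival I ⊆ ival J), (b I * β I) ^ 2 * len I)
      ≤ carlOn (b.support ∩ β.support) (fun I => b I * β I) :=
    fun J => le_ciSup hbddA J
  have hK0 : 0 ≤ carlOn (b.support ∩ β.support) (fun I => b I * β I) :=
    (Real.sqrt_nonneg _).trans (hK_le (0, 0))
  have hKprop : ∀ J : D, ∑ I ∈ (b.support ∩ β.support).filter (fun I => ival I ⊆ ival J),
      (fun I => b I * β I) I ^ 2 * len I
      ≤ (carlOn (b.support ∩ β.support) (fun I => b I * β I)) ^ 2 * len J := by
    intro J
    have h1 : (len J)⁻¹ * ∑ I ∈ (b.support ∩ β.support).filter (fun I => ival I ⊆ ival J),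
        (b I * β I) ^ 2 * len I
        ≤ (carlOn (b.support ∩ β.support) (fun I => b I * β I)) ^ 2 := by
      rw [show (len J)⁻¹ * ∑ I ∈ (b.support ∩ β.support).filter (fun I => ival I ⊆ ival J),
          (b I * β I) ^ 2 * len I
        = (Real.sqrt ((len J)⁻¹ * ∑ I ∈ (b.support ∩ β.support).filter
            (fun I => ival I ⊆ ival J), (b I * β I) ^ 2 * len I)) ^ 2
          from (Real.sq_sqrt (hq0 J)).symm]
      exact pow_le_pow_left₀ (Real.sqrt_nonneg _) (hK_le J) 2
    have h2 := mul_le_mul_of_nonneg_left h1 (len_pos J).le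
    calc ∑ I ∈ (b.support ∩ β.support).filter (fun I => ival I ⊆ ival J),
          (fun I => b I * β I) I ^ 2 * len I
        = len J * ((len J)⁻¹ * ∑ I ∈ (b.support ∩ β.support).filter
            (fun I => ival I ⊆ ival J), (b I * β I) ^ 2 * len I) := by
          rw [← mul_assoc, mul_inv_cancel₀ (len_pos J).ne', one_mul]
      _ ≤ len J * (carlOn (b.support ∩ β.support) (fun I => b I * β I)) ^ 2 := h2
      _ = (carlOn (b.support ∩ β.support) (fun I => b I * β I)) ^ 2 * len J := by ring
  -- the averaged square norm identity
  have hAVG : ∀ (f : ℝ → ℝ), MemLp f 2 volume →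
      ∫ σ, l2normSq (P true false b (Psig σ false true β f)) ∂μ
        = ∑ I ∈ b.support ∩ β.support, (b I * β I * ip f (haar1 I)) ^ 2 := by
    intro f hf
    rw [avg_identity hμ b β f hf]
    refine (Finset.sum_subset Finset.inter_subset_left fun x hx hnx => ?_).symm
    have hβ : β x = 0 := by
      by_contra h
      exact hnx (Finset.mem_inter.2 ⟨hx, Finsupp.mem_support_iff.2 h⟩)
    rw [hβ]
    ring
  -- upper bound for each unit vector
  have hupper : ∀ (f : {f : ℝ → ℝ // UnitL2 f}),
      Real.sqrt (∫ σ, l2normSq (P true false b (Psig σ false true β f.1)) ∂μ)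
        ≤ 3 * carlOn (b.support ∩ β.support) (fun I => b I * β I) := by
    rintro ⟨f, hf, hnorm⟩
    rw [hAVG f hf]
    have h8 := carleson_embedding (b.support ∩ β.support) (fun I => b I * β I)
      (carlOn (b.support ∩ β.support) (fun I => b I * β I)) hKprop f hf
    have hint : ∫ x, f x ^ 2 = 1 := by
      rw [integral_sq_eq_norm hf, hnorm]
      simp
    rw [hint, mul_one] at h8
    have h9 : ∑ I ∈ b.support ∩ β.support, (b I * β I * ip f (haar1 I)) ^ 2
        ≤ 9 * (carlOn (b.support ∩ β.support) (fun I => b I * β I)) ^ 2 := by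
      refine le_trans ?_ (by nlinarith [sq_nonneg (carlOn (b.support ∩ β.support)
        (fun I => b I * β I))] : 8 * (carlOn (b.support ∩ β.support) (fun I => b I * β I)) ^ 2
          ≤ 9 * (carlOn (b.support ∩ β.support) (fun I => b I * β I)) ^ 2)
      exact h8
    calc Real.sqrt (∑ I ∈ b.support ∩ β.support, (b I * β I * ip f (haar1 I)) ^ 2)
        ≤ Real.sqrt (9 * (carlOn (b.support ∩ β.support) (fun I => b I * β I)) ^ 2) :=
          Real.sqrt_le_sqrt h9
      _ = 3 * carlOn (b.support ∩ β.support) (fun I => b I * β I) := by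
          rw [show (9:ℝ) * (carlOn (b.support ∩ β.support) (fun I => b I * β I)) ^ 2
            = (3 * carlOn (b.support ∩ β.support) (fun I => b I * β I)) ^ 2 by ring]
          exact Real.sqrt_sq (by linarith)
  have hbddavg : BddAbove (Set.range fun f : {f : ℝ → ℝ // UnitL2 f} =>
      Real.sqrt (∫ σ, l2normSq (P true false b (Psig σ false true β f.1)) ∂μ)) :=
    ⟨3 * carlOn (b.support ∩ β.support) (fun I => b I * β I), by
      rintro x ⟨f, rfl⟩; exact hupper f⟩
  constructor
  · rw [one_mul]
    unfold carlOn avgOpNorm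
    refine ciSup_le fun J => ?_
    have hle : Real.sqrt ((len J)⁻¹ * ∑ I ∈ (b.support ∩ β.support).filter
        (fun I => ival I ⊆ ival J), (fun I => b I * β I) I ^ 2 * len I)
        ≤ Real.sqrt (∫ σ, l2normSq (P true false b (Psig σ false true β (haar1 J))) ∂μ) := by
      apply Real.sqrt_le_sqrt
      rw [hAVG (haar1 J) (memℒp_haar1 J)]
      calc (len J)⁻¹ * ∑ I ∈ (b.support ∩ β.support).filter (fun I => ival I ⊆ ival J),
            (fun I => b I * β I) I ^ 2 * len I
          = ∑ I ∈ (b.support ∩ β.support).filter (fun I => ival I ⊆ ival J),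
              (b I * β I * ip (haar1 J) (haar1 I)) ^ 2 := by
            rw [Finset.mul_sum]
            refine Finset.sum_congr rfl fun I hI => ?_
            have hip : ip (haar1 J) (haar1 I) = Real.sqrt (len I) / Real.sqrt (len J) := by
              rw [ip_comm]
              exact ip_haar1_nested (Finset.mem_filter.1 hI).2
            rw [hip, mul_pow (b I * β I) (Real.sqrt (len I) / Real.sqrt (len J)) 2,
              div_pow (Real.sqrt (len I)) (Real.sqrt (len J)) 2,
              Real.sq_sqrt (len_pos I).le, Real.sq_sqrt (len_pos J).le]
            rw [div_eq_mul_inv]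
            ring
        _ ≤ ∑ I ∈ b.support ∩ β.support, (b I * β I * ip (haar1 J) (haar1 I)) ^ 2 :=
            Finset.sum_le_sum_of_subset_of_nonneg (Finset.filter_subset _ _)
              (fun i _ _ => sq_nonneg _)
    exact hle.trans (le_ciSup hbddavg ⟨haar1 J, unit_haar1 J⟩)
  · unfold avgOpNorm
    exact ciSup_le hupper

end RandomParaproducts
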